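/- arXiv:1702.08239 — 3 statements merged into one kernel-verified Lean document; each statement's English description precedes it below -/
import Mathlib

section
/- For α ∈ (0,1), the function f(w) = (α/Γ(1-α)) · w^(-α-1) · (1 - e^(-w)) for w > 0 is a probability density, i.e., ∫₀^∞ (α/Γ(1-α)) w^(-α-1)(1-e^(-w)) dw = 1. -/
open MeasureTheory Real Set Filter Topology

lemma bfry_key (α : ℝ) (hα0 : 0 < α) (hα1 : α < 1) :
    ∫ w in Ioi (0:ℝ), (1 - Real.exp (-w)) * w ^ (-α - 1)
      = Real.Gamma (1 - α) / α := by
  have h1α : (0:ℝ) < 1 - α := by linarith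
  -- u = 1 - exp(-w), v = w^(-α) / (-α)
  set u : ℝ → ℝ := fun w => 1 - Real.exp (-w) with hu_def
  set u' : ℝ → ℝ := fun w => Real.exp (-w) with hu'_def
  set v : ℝ → ℝ := fun w => w ^ (-α) / (-α) with hv_def
  set v' : ℝ → ℝ := fun w => w ^ (-α - 1) with hv'_def
  have hu : ∀ x ∈ Ioi (0:ℝ), HasDerivAt u (u' x) x := by
    intro x _
    simpa using ((Real.hasDerivAt_exp (-x)).comp x (hasDerivAt_neg x)).const_sub 1
  have hv : ∀ x ∈ Ioi (0:ℝ), HasDerivAt v (v' x) x := by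
    intro x hx
    have hx0 : x ≠ 0 := ne_of_gt hx
    have h := (Real.hasDerivAt_rpow_const (p := -α) (Or.inl hx0)).div_const (-α)
    rw [mul_div_cancel_left₀ _ (neg_ne_zero.mpr hα0.ne')] at h
    exact h
  have hΓint : IntegrableOn (fun x => Real.exp (-x) * x ^ (-α)) (Ioi (0:ℝ)) := by
    have := Real.GammaIntegral_convergent h1α
    simpa using this
  have hu'v : IntegrableOn (u' * v) (Ioi (0:ℝ)) := by
    have h := hΓint.div_const (-α)
    refine IntegrableOn.congr_fun h (fun x _ => ?_) measurableSet_Ioi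
    simp [u', v, mul_div_assoc]
  have huv' : IntegrableOn (u * v') (Ioi (0:ℝ)) := by
    have h01 : IntegrableOn (u * v') (Ioc (0:ℝ) 1) := by
      have hmono : IntegrableOn (fun x : ℝ => x ^ (-α)) (Ioc (0:ℝ) 1) := by
        have := intervalIntegral.intervalIntegrable_rpow' (a := 0) (b := 1)
          (r := -α) (by linarith)
        rw [intervalIntegrable_iff_integrableOn_Ioc_of_le (by norm_num)] at this
        exact this
      refine hmono.integrable.mono ?_ ?_
      · apply (Measurable.aestronglyMeasurable ?_).restrict
        apply Measurable.mul
        · exact (Real.measurable_exp.comp measurable_neg).const_sub 1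
        · exact measurable_id.pow measurable_const
      · filter_upwards [ae_restrict_mem measurableSet_Ioc] with x hx
        have hx0 := hx.1
        have hb : 1 - Real.exp (-x) ≤ x := by
          nlinarith [Real.add_one_le_exp (-x)]
        have hb0 : 0 ≤ 1 - Real.exp (-x) := by
          simp [Real.exp_le_one_iff.2 (by linarith : -x ≤ 0)]
        rw [Real.norm_eq_abs, Real.norm_eq_abs, abs_of_nonneg (Real.rpow_nonneg hx0.le _),
          Pi.mul_apply, abs_of_nonneg (mul_nonneg hb0 (Real.rpow_nonneg hx0.le _))]
        calc (1 - Real.exp (-x)) * x ^ (-α - 1) ≤ x * x ^ (-α - 1) := by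
              exact mul_le_mul_of_nonneg_right hb (Real.rpow_nonneg hx0.le _)
          _ = x ^ (-α) := by
              rw [← Real.rpow_one_add' hx0.le (by intro h; linarith)]
              congr 1; ring
    have h1i : IntegrableOn (u * v') (Ioi (1:ℝ)) := by
      have hmono : IntegrableOn (fun x : ℝ => x ^ (-α - 1)) (Ioi (1:ℝ)) :=
        integrableOn_Ioi_rpow_of_lt (by linarith) one_pos
      refine hmono.integrable.mono ?_ ?_
      · apply (Measurable.aestronglyMeasurable ?_).restrict
        apply Measurable.mul
        · exact (Real.measurable_exp.comp measurable_neg).const_sub 1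
        · exact measurable_id.pow measurable_const
      · filter_upwards [ae_restrict_mem measurableSet_Ioi] with x hx
        have hx0 : (0:ℝ) < x := lt_trans one_pos hx
        have hb0 : 0 ≤ 1 - Real.exp (-x) := by
          simp [Real.exp_le_one_iff.2 (by linarith : -x ≤ 0)]
        have hb1 : 1 - Real.exp (-x) ≤ 1 := sub_le_self _ (Real.exp_pos _).le
        rw [Real.norm_eq_abs, Real.norm_eq_abs, abs_of_nonneg (Real.rpow_nonneg hx0.le _),
          Pi.mul_apply, abs_of_nonneg (mul_nonneg hb0 (Real.rpow_nonneg hx0.le _))]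
        nlinarith [Real.rpow_nonneg hx0.le (-α - 1),
          mul_le_mul_of_nonneg_right hb1 (Real.rpow_nonneg hx0.le (-α - 1))]
    have h := h01.union h1i
    rwa [Ioc_union_Ioi_eq_Ioi zero_le_one] at h
  have h_zero : Tendsto (u * v) (𝓝[>] (0:ℝ)) (𝓝 0) := by
    have hslope : Tendsto (fun x : ℝ => (1 - Real.exp (-x)) / x) (𝓝[>] 0) (𝓝 1) := by
      have hd : HasDerivAt u 1 0 := by
        simpa using ((Real.hasDerivAt_exp (-(0:ℝ))).comp 0 (hasDerivAt_neg 0)).const_sub 1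
      have := (hasDerivAt_iff_tendsto_slope.mp hd).mono_left
        (nhdsWithin_mono _ (fun x hx => ne_of_gt hx))
      refine this.congr' ?_
      filter_upwards [self_mem_nhdsWithin] with x (hx : 0 < x)
      simp [slope, u, div_eq_inv_mul]
    have hpow : Tendsto (fun x : ℝ => x ^ (1 - α) / (-α)) (𝓝[>] 0) (𝓝 0) := by
      have hc : ContinuousAt (fun x : ℝ => x ^ (1 - α)) 0 :=
        Real.continuousAt_rpow_const 0 (1 - α) (Or.inr h1α.le)
      have h := (hc.tendsto.mono_left (nhdsWithin_le_nhds (s := Ioi (0:ℝ)))).div_const (-α)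
      simpa [Real.zero_rpow h1α.ne'] using h
    have := hslope.mul hpow
    rw [one_mul] at this
    refine this.congr' ?_
    filter_upwards [self_mem_nhdsWithin] with x (hx : 0 < x)
    have : x ^ (1 - α) = x * x ^ (-α) := by
      rw [← Real.rpow_one_add' hx.le (by intro h; linarith)]
      ring_nf
    show _ = u x * v x
    simp only [u, v, this]
    rw [mul_div_assoc x, ← mul_assoc, div_mul_cancel₀ _ hx.ne']
  have h_infty : Tendsto (u * v) atTop (𝓝 0) := by
    have h1 : Tendsto u atTop (𝓝 1) := by
      have : Tendsto (fun x : ℝ => Real.exp (-x)) atTop (𝓝 0) :=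
        Real.tendsto_exp_atBot.comp tendsto_neg_atTop_atBot
      simpa using this.const_sub 1
    have h2 : Tendsto v atTop (𝓝 0) := by
      have := (tendsto_rpow_neg_atTop hα0).div_const (-α)
      simpa [v] using this
    have h3 := h1.mul h2
    rw [mul_zero] at h3
    exact h3
  have key := integral_Ioi_mul_deriv_eq_deriv_mul hu hv huv' hu'v h_zero h_infty
  have hΓ : Real.Gamma (1 - α) = ∫ x in Ioi (0:ℝ), Real.exp (-x) * x ^ (-α) := by
    rw [Real.Gamma_eq_integral h1α]
    congr 1; ext x; congr 1; ring_nf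
  have hrhs : ∫ x in Ioi (0:ℝ), u' x * v x = -(Real.Gamma (1 - α) / α) := by
    have heq : ∀ x : ℝ, u' x * v x = (Real.exp (-x) * x ^ (-α)) / (-α) := fun x => by
      simp [u', v, mul_div_assoc]
    simp_rw [heq, integral_div, ← hΓ, div_neg]
  calc ∫ w in Ioi (0:ℝ), (1 - Real.exp (-w)) * w ^ (-α - 1)
      = ∫ x in Ioi (0:ℝ), u x * v' x := rfl
    _ = 0 - 0 - ∫ x in Ioi (0:ℝ), u' x * v x := key
    _ = Real.Gamma (1 - α) / α := by rw [hrhs]; ring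

/-- The BFRY density with discount parameter `α ∈ (0,1)` integrates to one:
`∫₀^∞ (α/Γ(1-α)) w^(-α-1) (1 - e^(-w)) dw = 1`. -/
theorem bfry_density_integrates_to_one (α : ℝ) (hα0 : 0 < α) (hα1 : α < 1) :
    ∫ w in Ioi (0:ℝ),
      (α / Real.Gamma (1 - α)) * w ^ (-α - 1) * (1 - Real.exp (-w)) = 1 := by
  have hΓpos : 0 < Real.Gamma (1 - α) := Real.Gamma_pos_of_pos (by linarith)
  have key := bfry_key α hα0 hα1
  have : ∫ w in Ioi (0:ℝ),
      (α / Real.Gamma (1 - α)) * w ^ (-α - 1) * (1 - Real.exp (-w))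
      = (α / Real.Gamma (1 - α)) * ∫ w in Ioi (0:ℝ), (1 - Real.exp (-w)) * w ^ (-α - 1) := by
    rw [← integral_const_mul]
    congr 1; ext w; ring
  rw [this, key]
  field_simp
end

section
/- Let α ∈ (0,1), let g be a Gamma(1-α, 1) random variable and b an independent Beta(α, 1) random variable. Then the ratio Z = g/b has probability density proportional to z^(-α-1)(1-e^(-z)) on (0,∞), i.e., Z is BFRY distributed with parameter α. -/
open MeasureTheory ProbabilityTheory Real Set

noncomputable def bfryGammaDens (α : ℝ) : ℝ → ENNReal := fun x =>
  ENNReal.ofReal (Set.indicator (Ioi (0:ℝ))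
    (fun x => x ^ (-α) * Real.exp (-x) / Real.Gamma (1 - α)) x)

noncomputable def bfryBetaDens (α : ℝ) : ℝ → ENNReal := fun x =>
  ENNReal.ofReal (Set.indicator (Ioo (0:ℝ) 1) (fun x => α * x ^ (α - 1)) x)

noncomputable def bfryKernel (α : ℝ) (J : ℝ → ENNReal) : ℝ × ℝ → ENNReal := fun p =>
  Set.indicator (Ioi (0:ℝ))
      (fun z => ENNReal.ofReal (α / Real.Gamma (1 - α) * z ^ (-α))) p.1 *
    (Set.indicator (Ioo (0:ℝ) 1) (1 : ℝ → ENNReal) p.2 *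
      ENNReal.ofReal (Real.exp (-(p.2 * p.1)))) * J p.1

lemma bfryGammaDens_measurable (α : ℝ) : Measurable (bfryGammaDens α) := by
  apply Measurable.ennreal_ofReal
  exact Measurable.indicator (by fun_prop) measurableSet_Ioi

lemma bfryBetaDens_measurable (α : ℝ) : Measurable (bfryBetaDens α) := by
  apply Measurable.ennreal_ofReal
  exact Measurable.indicator (by fun_prop) measurableSet_Ioo

lemma bfryKernel_measurable (α : ℝ) {J : ℝ → ENNReal} (hJ : Measurable J) :
    Measurable (bfryKernel α J) := by
  apply Measurable.mul
  apply Measurable.mul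
  · exact (Measurable.indicator (by fun_prop) measurableSet_Ioi).comp measurable_fst
  · exact ((measurable_one.indicator measurableSet_Ioo).comp measurable_snd).mul (by fun_prop)
  · exact hJ.comp measurable_fst

lemma bfry_exp_lintegral {z : ℝ} (hz : 0 < z) :
    ∫⁻ y in Ioo (0:ℝ) 1, ENNReal.ofReal (Real.exp (-(y * z))) =
      ENNReal.ofReal ((1 - Real.exp (-z)) / z) := by
  have hcont : Continuous fun y : ℝ => Real.exp (-(y * z)) := by continuity
  have hint : IntegrableOn (fun y : ℝ => Real.exp (-(y * z))) (Ioo 0 1) volume :=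
    (hcont.integrableOn_Icc (a := 0) (b := 1)).mono_set Ioo_subset_Icc_self
  rw [← ofReal_integral_eq_lintegral_ofReal hint
    (ae_of_all _ fun y => (Real.exp_pos _).le)]
  congr 1
  have h1 : ∫ y in Ioo (0:ℝ) 1, Real.exp (-(y * z)) =
      ∫ y in (0:ℝ)..1, Real.exp (-(z * y)) := by
    rw [intervalIntegral.integral_of_le zero_le_one, ← integral_Ioc_eq_integral_Ioo]
    simp_rw [mul_comm]
  rw [h1, intervalIntegral.integral_comp_mul_left (fun u => Real.exp (-u)) hz.ne']
  rw [intervalIntegral.integral_comp_neg fun u => Real.exp u]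
  rw [integral_exp]
  simp only [mul_one, mul_zero, neg_zero, Real.exp_zero, smul_eq_mul]
  field_simp

lemma bfry_subst (α : ℝ) (hα0 : 0 < α) (hα1 : α < 1)
    {J : ℝ → ENNReal} (hJ : Measurable J) (y : ℝ) :
    bfryBetaDens α y * ∫⁻ x, bfryGammaDens α x * J (x / y) ∂volume =
      ∫⁻ z, bfryKernel α J (z, y) ∂volume := by
  by_cases hy : y ∈ Ioo (0:ℝ) 1
  · obtain ⟨hy0, hy1⟩ := hy
    have hΓ : 0 < Real.Gamma (1 - α) := Real.Gamma_pos_of_pos (by linarith)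
    have hmeas : Measurable fun x => bfryGammaDens α x * J (x / y) :=
      (bfryGammaDens_measurable α).mul (hJ.comp (measurable_id.div_const y))
    have hmap := Real.smul_map_volume_mul_left (a := y) hy0.ne'
    calc bfryBetaDens α y * ∫⁻ x, bfryGammaDens α x * J (x / y) ∂volume
        = bfryBetaDens α y * ∫⁻ x, bfryGammaDens α x * J (x / y)
            ∂(ENNReal.ofReal |y| • Measure.map (y * ·) volume) := by rw [hmap]
      _ = bfryBetaDens α y * (ENNReal.ofReal y *
            ∫⁻ z, bfryGammaDens α (y * z) * J ((y * z) / y) ∂volume) := by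
          rw [lintegral_smul_measure, lintegral_map hmeas (measurable_const_mul y),
            abs_of_pos hy0, smul_eq_mul]
      _ = ∫⁻ z, (bfryBetaDens α y * ENNReal.ofReal y) *
            (bfryGammaDens α (y * z) * J z) ∂volume := by
          have hm2 : Measurable fun z => bfryGammaDens α (y * z) * J z :=
            ((bfryGammaDens_measurable α).comp (measurable_const_mul y)).mul hJ
          rw [lintegral_const_mul (bfryBetaDens α y * ENNReal.ofReal y) hm2]
          simp_rw [mul_div_cancel_left₀ _ hy0.ne', mul_assoc]
      _ = ∫⁻ z, bfryKernel α J (z, y) ∂volume := by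
          apply lintegral_congr
          intro z
          by_cases hz : z ∈ Ioi (0:ℝ)
          · have hz0 : (0:ℝ) < z := hz
            have hyz : (0:ℝ) < y * z := mul_pos hy0 hz0
            unfold bfryBetaDens bfryGammaDens bfryKernel
            rw [Set.indicator_of_mem (mem_Ioo.2 ⟨hy0, hy1⟩),
              Set.indicator_of_mem (mem_Ioi.2 hyz),
              Set.indicator_of_mem hz, Set.indicator_of_mem (mem_Ioo.2 ⟨hy0, hy1⟩)]
            have key : α * y ^ (α - 1) * y *
                ((y * z) ^ (-α) * Real.exp (-(y * z)) / Real.Gamma (1 - α)) =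
                α / Real.Gamma (1 - α) * z ^ (-α) * Real.exp (-(y * z)) := by
              rw [Real.mul_rpow hy0.le hz0.le]
              have h3 : y ^ (α - 1) * y * y ^ (-α) = 1 := by
                rw [← Real.rpow_add_one hy0.ne' (α - 1)]
                rw [← Real.rpow_add hy0]
                norm_num
              linear_combination (α * z ^ (-α) * Real.exp (-(y * z)) /
                Real.Gamma (1 - α)) * h3
            have e1 : ENNReal.ofReal (α * y ^ (α - 1)) * ENNReal.ofReal y *
                ENNReal.ofReal ((y * z) ^ (-α) * Real.exp (-(y * z)) /
                  Real.Gamma (1 - α)) =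
                ENNReal.ofReal (α / Real.Gamma (1 - α) * z ^ (-α)) *
                  ENNReal.ofReal (Real.exp (-(y * z))) := by
              have e0 : α * y ^ (α - 1) * y *
                  ((y * z) ^ (-α) * Real.exp (-(y * z)) / Real.Gamma (1 - α)) =
                  α / Real.Gamma (1 - α) * z ^ (-α) * Real.exp (-(y * z)) := key
              rw [← ENNReal.ofReal_mul (by positivity),
                ← ENNReal.ofReal_mul (by positivity), e0,
                ENNReal.ofReal_mul (by positivity)]
            simp only [Pi.one_apply, one_mul]
            calc ENNReal.ofReal (α * y ^ (α - 1)) * ENNReal.ofReal y *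
                  (ENNReal.ofReal ((y * z) ^ (-α) * Real.exp (-(y * z)) /
                    Real.Gamma (1 - α)) * J z)
                = (ENNReal.ofReal (α * y ^ (α - 1)) * ENNReal.ofReal y *
                    ENNReal.ofReal ((y * z) ^ (-α) * Real.exp (-(y * z)) /
                      Real.Gamma (1 - α))) * J z := by ring
              _ = _ := by rw [e1]; try ring
          · have hyz : y * z ∉ Ioi (0:ℝ) := by
              simp only [mem_Ioi, not_lt] at hz ⊢
              exact mul_nonpos_iff.2 (Or.inl ⟨hy0.le, hz⟩)
            unfold bfryGammaDens bfryKernel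
            rw [Set.indicator_of_notMem hyz, Set.indicator_of_notMem hz]
            simp
  · have h1 : bfryBetaDens α y = 0 := by
      unfold bfryBetaDens
      rw [Set.indicator_of_notMem hy]
      simp
    have h2 : ∀ z, bfryKernel α J (z, y) = 0 := by
      intro z
      unfold bfryKernel
      rw [Set.indicator_of_notMem hy]
      simp
    simp [h1, h2]

lemma bfry_zint (α : ℝ) (hα0 : 0 < α) (hα1 : α < 1)
    {J : ℝ → ENNReal} (hJ : Measurable J) (z : ℝ) :
    ∫⁻ y, bfryKernel α J (z, y) ∂volume =
      ENNReal.ofReal (Set.indicator (Ioi (0:ℝ))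
        (fun z => (α / Real.Gamma (1 - α)) * z ^ (-α - 1) * (1 - Real.exp (-z))) z) *
        J z := by
  have hΓ : 0 < Real.Gamma (1 - α) := Real.Gamma_pos_of_pos (by linarith)
  by_cases hz : z ∈ Ioi (0:ℝ)
  · have hz0 : (0:ℝ) < z := hz
    have hpt : ∀ y, bfryKernel α J (z, y) =
        (ENNReal.ofReal (α / Real.Gamma (1 - α) * z ^ (-α)) * J z) *
          Set.indicator (Ioo (0:ℝ) 1) (fun y => ENNReal.ofReal (Real.exp (-(y * z)))) y := by
      intro y
      unfold bfryKernel
      rw [Set.indicator_of_mem hz]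
      by_cases hy : y ∈ Ioo (0:ℝ) 1
      · rw [Set.indicator_of_mem hy, Set.indicator_of_mem hy, Pi.one_apply]
        ring
      · rw [Set.indicator_of_notMem hy, Set.indicator_of_notMem hy]
        simp
    rw [lintegral_congr hpt, lintegral_const_mul _
      ((Measurable.ennreal_ofReal (by fun_prop)).indicator measurableSet_Ioo),
      lintegral_indicator measurableSet_Ioo _, bfry_exp_lintegral hz0]
    rw [Set.indicator_of_mem hz]
    have key : α / Real.Gamma (1 - α) * z ^ (-α) * ((1 - Real.exp (-z)) / z) =
        α / Real.Gamma (1 - α) * z ^ (-α - 1) * (1 - Real.exp (-z)) := by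
      have h1 : z ^ (-α - 1) = z ^ (-α) * z⁻¹ := by
        rw [← Real.rpow_neg_one z, ← Real.rpow_add hz0]
        ring_nf
      rw [h1]
      field_simp
    have e2 : ENNReal.ofReal (α / Real.Gamma (1 - α) * z ^ (-α)) *
        ENNReal.ofReal ((1 - Real.exp (-z)) / z) =
        ENNReal.ofReal (α / Real.Gamma (1 - α) * z ^ (-α - 1) * (1 - Real.exp (-z))) := by
      rw [← ENNReal.ofReal_mul (by positivity), key]
    calc ENNReal.ofReal (α / Real.Gamma (1 - α) * z ^ (-α)) * J z *
          ENNReal.ofReal ((1 - Real.exp (-z)) / z)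
        = (ENNReal.ofReal (α / Real.Gamma (1 - α) * z ^ (-α)) *
            ENNReal.ofReal ((1 - Real.exp (-z)) / z)) * J z := by ring
      _ = _ := by rw [e2]
  · have h2 : ∀ y, bfryKernel α J (z, y) = 0 := by
      intro y
      unfold bfryKernel
      rw [Set.indicator_of_notMem hz]
      simp
    rw [Set.indicator_of_notMem hz]
    simp [h2]

/-- If `g ~ Gamma(1-α,1)` (density `x^(-α) e^(-x)/Γ(1-α)` on `(0,∞)`) and
`b ~ Beta(α,1)` (density `α x^(α-1)` on `(0,1)`) are independent, then the ratio
`Z = g/b` has the BFRY density `(α/Γ(1-α)) z^(-α-1)(1-e^(-z))` on `(0,∞)`. -/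
theorem ratio_gamma_beta_is_bfry (α : ℝ) (hα0 : 0 < α) (hα1 : α < 1)
    {Ω : Type*} [MeasureSpace Ω] [IsProbabilityMeasure (volume : Measure Ω)]
    (g b : Ω → ℝ) (hgm : Measurable g) (hbm : Measurable b)
    (hindep : IndepFun g b)
    (hg : Measure.map g volume = volume.withDensity (fun x =>
      ENNReal.ofReal (Set.indicator (Ioi (0:ℝ))
        (fun x => x ^ (-α) * Real.exp (-x) / Real.Gamma (1 - α)) x)))
    (hb : Measure.map b volume = volume.withDensity (fun x =>
      ENNReal.ofReal (Set.indicator (Ioo (0:ℝ) 1)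
        (fun x => α * x ^ (α - 1)) x))) :
    Measure.map (fun ω => g ω / b ω) volume = volume.withDensity (fun z =>
      ENNReal.ofReal (Set.indicator (Ioi (0:ℝ))
        (fun z => (α / Real.Gamma (1 - α)) * z ^ (-α - 1) * (1 - Real.exp (-z))) z)) := by
  have hdiv : Measurable fun p : ℝ × ℝ => p.1 / p.2 := measurable_fst.div measurable_snd
  have hpair : Measurable fun ω => (g ω, b ω) := hgm.prodMk hbm
  have hfγ : Measurable (bfryGammaDens α) := bfryGammaDens_measurable α
  have hfβ : Measurable (bfryBetaDens α) := bfryBetaDens_measurable α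
  have hmm : Measure.map (fun ω => g ω / b ω) volume
      = Measure.map (fun p : ℝ × ℝ => p.1 / p.2)
          ((volume.withDensity (bfryGammaDens α)).prod
            (volume.withDensity (bfryBetaDens α))) := by
    rw [show (volume.withDensity (bfryGammaDens α)) = Measure.map g volume from hg.symm,
      show (volume.withDensity (bfryBetaDens α)) = Measure.map b volume from hb.symm,
      ← (indepFun_iff_map_prod_eq_prod_map_map hgm.aemeasurable hbm.aemeasurable).mp hindep,
      Measure.map_map hdiv hpair]
    rfl
  rw [hmm]
  refine Measure.ext fun S hS => ?_
  set J : ℝ → ENNReal := S.indicator 1 with hJdef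
  have hJm : Measurable J := measurable_one.indicator hS
  rw [Measure.map_apply hdiv hS, ← lintegral_indicator_one (hdiv hS)]
  have h0 : ∀ p : ℝ × ℝ, ((fun p : ℝ × ℝ => p.1 / p.2) ⁻¹' S).indicator
      (1 : ℝ × ℝ → ENNReal) p = J (p.1 / p.2) := by
    intro p
    by_cases h : p.1 / p.2 ∈ S <;> simp [hJdef, Set.indicator, h]
  rw [lintegral_congr h0, lintegral_prod_symm' (fun p : ℝ × ℝ => J (p.1 / p.2)) (hJm.comp hdiv)]
  have h1 : ∀ y : ℝ, ∫⁻ x, J (x / y) ∂(volume.withDensity (bfryGammaDens α)) =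
      ∫⁻ x, bfryGammaDens α x * J (x / y) ∂volume := fun y =>
    lintegral_withDensity_eq_lintegral_mul volume hfγ (hJm.comp (measurable_id.div_const y))
  rw [lintegral_congr h1]
  have hF : Measurable fun y => ∫⁻ x, bfryGammaDens α x * J (x / y) ∂volume := by
    have : Measurable fun p : ℝ × ℝ => bfryGammaDens α p.1 * J (p.1 / p.2) :=
      (hfγ.comp measurable_fst).mul (hJm.comp hdiv)
    exact this.lintegral_prod_left'
  rw [lintegral_withDensity_eq_lintegral_mul volume hfβ hF]
  simp only [Pi.mul_apply]
  rw [lintegral_congr (bfry_subst α hα0 hα1 hJm)]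
  have hK : Measurable (bfryKernel α J) := bfryKernel_measurable α hJm
  rw [← lintegral_prod_symm' (bfryKernel α J) hK, lintegral_prod _ hK.aemeasurable]
  rw [lintegral_congr (bfry_zint α hα0 hα1 hJm)]
  rw [withDensity_apply _ hS, ← lintegral_indicator hS]
  apply lintegral_congr
  intro z
  by_cases h : z ∈ S
  · rw [Set.indicator_of_mem h]
    simp [hJdef, Set.indicator_of_mem h]
  · rw [Set.indicator_of_notMem h]
    simp [hJdef, Set.indicator_of_notMem h]
end

section
/- Let α ∈ (0,1) and C_n satisfy C_n → ∞ and C_n^α / n → 0. For each n, let V_{s,n,1}, ..., V_{s,n,n} be i.i.d. copies of V_{s,n} = W_n / C_n^(s-α), where W_n has truncated BFRY density f_n. Then the empirical mean (1/n)∑_{i=1}^n V_{s,n,i} minus E[V_{s,n}] converges to 0 in probability as n → ∞. -/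
open MeasureTheory ProbabilityTheory Real Set Filter
open scoped ENNReal NNReal

section Aux

lemma bfry_nonneg {α : ℝ} {u : ℝ} (hu : 0 < u) :
    0 ≤ u ^ (-α - 1) * (1 - Real.exp (-u)) := by
  apply mul_nonneg (Real.rpow_nonneg hu.le _)
  have : Real.exp (-u) ≤ 1 := Real.exp_le_one_iff.2 (by linarith)
  linarith

lemma bfry_meas (α : ℝ) : Measurable (fun u : ℝ => u ^ (-α - 1) * (1 - Real.exp (-u))) := by
  fun_prop

lemma bfry_le {α : ℝ} {u : ℝ} (hu : 0 < u) :
    u ^ (-α - 1) * (1 - Real.exp (-u)) ≤ u ^ (-α) := by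
  have h1 : 1 - Real.exp (-u) ≤ u := by
    have := Real.add_one_le_exp (-u); linarith
  calc u ^ (-α - 1) * (1 - Real.exp (-u)) ≤ u ^ (-α - 1) * u :=
        mul_le_mul_of_nonneg_left h1 (Real.rpow_nonneg hu.le _)
    _ = u ^ (-α) := by
        rw [← Real.rpow_add_one (ne_of_gt hu)]; ring_nf

lemma rpow_integrableOn {r C : ℝ} (hr : -1 < r) (hC : 0 < C) :
    IntegrableOn (fun u : ℝ => u ^ r) (Ioc 0 C) := by
  have := (intervalIntegral.integrableOn_Ioo_rpow_iff hC).2 hr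
  rwa [IntegrableOn, ← restrict_Ioo_eq_restrict_Ioc]

lemma bfry_integrableOn {α : ℝ} (hα0 : 0 < α) (hα1 : α < 1) {C : ℝ} (hC : 0 < C) :
    IntegrableOn (fun u : ℝ => u ^ (-α - 1) * (1 - Real.exp (-u))) (Ioc 0 C) := by
  apply Integrable.mono (rpow_integrableOn (by linarith : (-1:ℝ) < -α) hC)
    (bfry_meas α).aestronglyMeasurable.restrict
  filter_upwards [ae_restrict_mem measurableSet_Ioc] with u hu
  rw [Real.norm_eq_abs, Real.norm_eq_abs, abs_of_nonneg (bfry_nonneg hu.1),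
    abs_of_nonneg (Real.rpow_nonneg hu.1.le _)]
  exact bfry_le hu.1

lemma bfry_sq_key {α Zi u : ℝ} (hZi : 0 ≤ Zi) (hu0 : 0 < u) :
    Zi * u ^ (-α - 1) * (1 - Real.exp (-u)) * u ^ 2 ≤ Zi * u ^ (1 - α) := by
  have h1 : (0:ℝ) < Real.exp (-u) := Real.exp_pos _
  have h2 : u ^ (-α - 1) * u ^ 2 = u ^ (1 - α) := by
    rw [← Real.rpow_two, ← Real.rpow_add hu0]; ring_nf
  calc Zi * u ^ (-α - 1) * (1 - Real.exp (-u)) * u ^ 2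
      ≤ Zi * u ^ (-α - 1) * 1 * u ^ 2 := by
        apply mul_le_mul_of_nonneg_right _ (sq_nonneg u)
        exact mul_le_mul_of_nonneg_left (by linarith)
          (mul_nonneg hZi (Real.rpow_nonneg hu0.le _))
    _ = Zi * u ^ (1 - α) := by rw [mul_one, mul_assoc, h2]

lemma bfry_sq_nonneg {α Zi u : ℝ} (hZi : 0 ≤ Zi) (hu0 : 0 < u) :
    0 ≤ Zi * u ^ (-α - 1) * (1 - Real.exp (-u)) * u ^ 2 := by
  apply mul_nonneg _ (sq_nonneg u)
  rw [mul_assoc]; exact mul_nonneg hZi (bfry_nonneg hu0)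

lemma bfry_sq_integrableOn {α : ℝ} (hα1 : α < 1) {C : ℝ} (hC : 0 < C)
    (Zi : ℝ) (hZi : 0 ≤ Zi) :
    IntegrableOn (fun w : ℝ => Zi * w ^ (-α - 1) * (1 - Real.exp (-w)) * w ^ 2) (Ioc 0 C) := by
  apply Integrable.mono ((rpow_integrableOn (by linarith : (-1:ℝ) < 1 - α) hC).const_mul Zi)
    (by fun_prop :
      Measurable fun w : ℝ => Zi * w ^ (-α-1) * (1 - Real.exp (-w)) * w ^ 2).aestronglyMeasurable.restrict
  filter_upwards [ae_restrict_mem measurableSet_Ioc] with u hu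
  rw [Real.norm_eq_abs, Real.norm_eq_abs, abs_of_nonneg (bfry_sq_nonneg hZi hu.1),
    abs_of_nonneg (mul_nonneg hZi (Real.rpow_nonneg hu.1.le _))]
  exact bfry_sq_key hZi hu.1

lemma bfry_Z_pos {α : ℝ} (hα0 : 0 < α) (hα1 : α < 1) {C : ℝ} (hC : 0 < C) :
    0 < ∫ u in Ioc (0:ℝ) C, u ^ (-α - 1) * (1 - Real.exp (-u)) := by
  have hnn : 0 ≤ᵐ[volume.restrict (Ioc (0:ℝ) C)]
      fun u : ℝ => u ^ (-α - 1) * (1 - Real.exp (-u)) := by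
    filter_upwards [ae_restrict_mem measurableSet_Ioc] with u hu
    exact bfry_nonneg hu.1
  rw [setIntegral_pos_iff_support_of_nonneg_ae hnn (bfry_integrableOn hα0 hα1 hC)]
  have hsub : Ioc (0:ℝ) C ⊆ Function.support
      (fun u : ℝ => u ^ (-α - 1) * (1 - Real.exp (-u))) := by
    intro u hu
    have h1 : (0:ℝ) < u ^ (-α - 1) := Real.rpow_pos_of_pos hu.1 _
    have h2 : Real.exp (-u) < 1 := Real.exp_lt_one_iff.2 (by linarith [hu.1])
    simp only [Function.mem_support]
    exact ne_of_gt (mul_pos h1 (by linarith))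
  calc (0:ℝ≥0∞) < ENNReal.ofReal C := by simp [hC]
    _ = volume (Ioc (0:ℝ) C) := by simp
    _ ≤ volume _ := measure_mono (subset_inter hsub subset_rfl)

lemma bfry_Z_mono {α : ℝ} (hα0 : 0 < α) (hα1 : α < 1) {C₁ C₂ : ℝ} (h1 : 0 < C₁) (h12 : C₁ ≤ C₂) :
    (∫ u in Ioc (0:ℝ) C₁, u ^ (-α - 1) * (1 - Real.exp (-u)))
      ≤ ∫ u in Ioc (0:ℝ) C₂, u ^ (-α - 1) * (1 - Real.exp (-u)) := by
  apply setIntegral_mono_set (bfry_integrableOn hα0 hα1 (lt_of_lt_of_le h1 h12))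
  · filter_upwards [ae_restrict_mem measurableSet_Ioc] with u hu
    exact bfry_nonneg hu.1
  · exact HasSubset.Subset.eventuallyLE (Ioc_subset_Ioc_right h12)

open intervalIntegral in
lemma rpow_setIntegral {r C : ℝ} (hr : -1 < r) (hC : 0 < C) :
    ∫ u in Ioc (0:ℝ) C, u ^ r = C ^ (r + 1) / (r + 1) := by
  rw [← intervalIntegral.integral_of_le hC.le]
  rw [integral_rpow (Or.inl hr), Real.zero_rpow (by linarith), sub_zero]

lemma wd_integral {f : ℝ → ℝ} (g : ℝ → ℝ) (hf : Measurable f) (hfnn : ∀ w, 0 ≤ f w) :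
    ∫ w, g w ∂(volume.withDensity fun w => ENNReal.ofReal (f w))
      = ∫ w, f w * g w := by
  have h : (fun w => ENNReal.ofReal (f w)) = fun w => ((f w).toNNReal : ℝ≥0∞) := rfl
  rw [h, integral_withDensity_eq_integral_smul hf.real_toNNReal g]
  apply integral_congr_ae; apply ae_of_all; intro w
  simp only [NNReal.smul_def, Real.coe_toNNReal _ (hfnn w), smul_eq_mul]

lemma wd_integrable_iff {f : ℝ → ℝ} (g : ℝ → ℝ) (hf : Measurable f) (hfnn : ∀ w, 0 ≤ f w) :
    Integrable g (volume.withDensity fun w => ENNReal.ofReal (f w)) ↔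
      Integrable (fun w => g w * f w) volume := by
  rw [integrable_withDensity_iff (by fun_prop) (ae_of_all _ fun w => ENNReal.ofReal_lt_top)]
  constructor <;> intro h <;> apply h.congr <;> apply ae_of_all <;> intro w <;>
    simp [ENNReal.toReal_ofReal (hfnn w)]

end Aux

/-- The truncated BFRY distribution on `(0, Cn]` with discount parameter `α`:
density `Z⁻¹ w^(-α-1)(1-e^(-w))` on `(0, Cn]`, where `Z` is the normalization. -/
noncomputable def truncBFRY (α Cn : ℝ) : Measure ℝ :=
  volume.withDensity (fun w => ENNReal.ofReal
    (Set.indicator (Ioc (0:ℝ) Cn)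
      (fun w => (∫ u in Ioc (0:ℝ) Cn, u ^ (-α - 1) * (1 - Real.exp (-u)))⁻¹ *
        w ^ (-α - 1) * (1 - Real.exp (-w))) w))

section Aux2

lemma bfry_den_meas (α C : ℝ) : Measurable (Set.indicator (Ioc (0:ℝ) C)
    (fun w => (∫ u in Ioc (0:ℝ) C, u ^ (-α - 1) * (1 - Real.exp (-u)))⁻¹ *
        w ^ (-α - 1) * (1 - Real.exp (-w)))) :=
  Measurable.indicator (by fun_prop) measurableSet_Ioc

lemma bfry_den_nonneg (α : ℝ) {C : ℝ}
    (hZ : 0 ≤ (∫ u in Ioc (0:ℝ) C, u ^ (-α - 1) * (1 - Real.exp (-u)))⁻¹)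
    (w : ℝ) : 0 ≤ Set.indicator (Ioc (0:ℝ) C)
      (fun w => (∫ u in Ioc (0:ℝ) C, u ^ (-α - 1) * (1 - Real.exp (-u)))⁻¹ *
        w ^ (-α - 1) * (1 - Real.exp (-w))) w := by
  apply Set.indicator_nonneg
  intro u hu
  rw [mul_assoc]
  have h2 : Real.exp (-u) ≤ 1 := Real.exp_le_one_iff.2 (by linarith [hu.1])
  exact mul_nonneg hZ (mul_nonneg (Real.rpow_nonneg hu.1.le _) (by linarith))

lemma truncBFRY_integral (α : ℝ) {C : ℝ}
    (hZ : 0 ≤ (∫ u in Ioc (0:ℝ) C, u ^ (-α - 1) * (1 - Real.exp (-u)))⁻¹) (g : ℝ → ℝ) :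
    ∫ w, g w ∂(truncBFRY α C)
      = ∫ w in Ioc (0:ℝ) C,
          ((∫ u in Ioc (0:ℝ) C, u ^ (-α - 1) * (1 - Real.exp (-u)))⁻¹ *
            w ^ (-α - 1) * (1 - Real.exp (-w))) * g w := by
  rw [truncBFRY, wd_integral g (bfry_den_meas α C) (bfry_den_nonneg α hZ)]
  rw [← integral_indicator (f := fun w =>
      ((∫ u in Ioc (0:ℝ) C, u ^ (-α - 1) * (1 - Real.exp (-u)))⁻¹ *
        w ^ (-α - 1) * (1 - Real.exp (-w))) * g w) measurableSet_Ioc]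
  apply integral_congr_ae; apply ae_of_all; intro w
  by_cases hw : w ∈ Ioc (0:ℝ) C <;>
    simp [Set.indicator_of_mem, Set.indicator_of_notMem, hw]

lemma truncBFRY_integrable_iff (α : ℝ) {C : ℝ}
    (hZ : 0 ≤ (∫ u in Ioc (0:ℝ) C, u ^ (-α - 1) * (1 - Real.exp (-u)))⁻¹) (g : ℝ → ℝ) :
    Integrable g (truncBFRY α C) ↔
      IntegrableOn (fun w =>
          ((∫ u in Ioc (0:ℝ) C, u ^ (-α - 1) * (1 - Real.exp (-u)))⁻¹ *
            w ^ (-α - 1) * (1 - Real.exp (-w))) * g w) (Ioc (0:ℝ) C) volume := by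
  rw [truncBFRY, wd_integrable_iff g (bfry_den_meas α C) (bfry_den_nonneg α hZ)]
  rw [← integrable_indicator_iff measurableSet_Ioc]
  constructor <;> intro h <;> apply h.congr <;> apply ae_of_all <;> intro w <;>
    by_cases hw : w ∈ Ioc (0:ℝ) C <;>
    simp [Set.indicator_of_mem, Set.indicator_of_notMem, hw, mul_comm]

lemma bfry_sq_int {α : ℝ} (hα0 : 0 < α) (hα1 : α < 1) {C : ℝ} (hC : 0 < C) :
    Integrable (fun w : ℝ => w ^ 2) (truncBFRY α C) := by
  have hZ : 0 ≤ (∫ u in Ioc (0:ℝ) C, u ^ (-α - 1) * (1 - Real.exp (-u)))⁻¹ :=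
    inv_nonneg.2 (bfry_Z_pos hα0 hα1 hC).le
  exact (truncBFRY_integrable_iff α hZ _).2 (bfry_sq_integrableOn hα1 hC _ hZ)

lemma bfry_sq_moment_le {α : ℝ} (hα0 : 0 < α) (hα1 : α < 1) {C : ℝ} (hC : 0 < C) :
    ∫ w, w ^ 2 ∂(truncBFRY α C)
      ≤ (∫ u in Ioc (0:ℝ) C, u ^ (-α - 1) * (1 - Real.exp (-u)))⁻¹ *
          (C ^ (2 - α) / (2 - α)) := by
  set Z : ℝ := ∫ u in Ioc (0:ℝ) C, u ^ (-α - 1) * (1 - Real.exp (-u)) with hZdef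
  have hZ : 0 ≤ Z⁻¹ := inv_nonneg.2 (bfry_Z_pos hα0 hα1 hC).le
  rw [truncBFRY_integral α hZ]
  have h1 : ∫ w in Ioc (0:ℝ) C, (Z⁻¹ * w ^ (-α - 1) * (1 - Real.exp (-w))) * w ^ 2
      ≤ ∫ w in Ioc (0:ℝ) C, Z⁻¹ * w ^ (1 - α) := by
    apply setIntegral_mono_on
    · exact bfry_sq_integrableOn hα1 hC _ hZ
    · exact (rpow_integrableOn (by linarith : (-1:ℝ) < 1 - α) hC).const_mul _
    · exact measurableSet_Ioc
    · intro w hw; exact bfry_sq_key hZ hw.1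
  refine h1.trans ?_
  rw [integral_const_mul, rpow_setIntegral (by linarith : (-1:ℝ) < 1 - α) hC]
  have he : (1:ℝ) - α + 1 = 2 - α := by ring
  rw [he]

end Aux2

/-- Weak law of large numbers for the triangular array `V_{s,n,i} = W_{n,i}/C_n^(s-α)`
with `W_{n,i}` i.i.d. truncated BFRY: the empirical mean minus its expectation
converges to `0` in probability as `n → ∞`. -/
theorem empirical_mean_tendsto_in_probability (α : ℝ) (hα0 : 0 < α) (hα1 : α < 1)
    (C : ℕ → ℝ) (hCpos : ∀ n, 0 < C n)
    (hC : Tendsto C atTop atTop)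
    (hCn : Tendsto (fun n => C n ^ α / (n : ℝ)) atTop (nhds 0))
    (s : ℝ) (hs : 1 ≤ s)
    {Ω : Type*} [MeasureSpace Ω] [IsProbabilityMeasure (volume : Measure Ω)]
    (W : (n : ℕ) → Fin n → Ω → ℝ)
    (hmeas : ∀ n i, Measurable (W n i))
    (hindep : ∀ n, iIndepFun (W n) volume)
    (hlaw : ∀ n i, Measure.map (W n i) volume = truncBFRY α (C n)) :
    ∀ ε > 0,
      Tendsto (fun n : ℕ => (volume : Measure Ω)
          {ω | ε ≤ |(1 / (n : ℝ)) * ∑ i : Fin n, W n i ω / C n ^ (s - α)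
            - ∫ w, (w / C n ^ (s - α)) ∂(truncBFRY α (C n))|})
        atTop (nhds 0) := by
  intro ε hε
  have h2α : (0:ℝ) < 2 - α := by linarith
  set Z1 : ℝ := ∫ u in Ioc (0:ℝ) 1, u ^ (-α - 1) * (1 - Real.exp (-u)) with hZ1def
  have hZ1pos : 0 < Z1 := bfry_Z_pos hα0 hα1 one_pos
  set D : ℝ := Z1⁻¹ / ((2 - α) * ε ^ 2) with hDdef
  have hDnn : 0 ≤ D := div_nonneg (inv_nonneg.2 hZ1pos.le) (by positivity)
  have hev : ∀ᶠ n : ℕ in atTop, (volume : Measure Ω)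
      {ω | ε ≤ |(1 / (n : ℝ)) * ∑ i : Fin n, W n i ω / C n ^ (s - α)
        - ∫ w, (w / C n ^ (s - α)) ∂(truncBFRY α (C n))|}
      ≤ ENNReal.ofReal (D * (C n ^ α / n)) := by
    filter_upwards [hC.eventually_ge_atTop 1, eventually_ge_atTop 1] with n hCn1 hn1
    have hCpos' : (0:ℝ) < C n := hCpos n
    have hnpos : (0:ℝ) < n := by exact_mod_cast hn1
    set μn := truncBFRY α (C n) with hμn
    set K : ℝ := C n ^ (s - α) with hKdef
    have hKpos : 0 < K := Real.rpow_pos_of_pos hCpos' _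
    set ZC : ℝ := ∫ u in Ioc (0:ℝ) (C n), u ^ (-α - 1) * (1 - Real.exp (-u)) with hZCdef
    have hZCpos : 0 < ZC := bfry_Z_pos hα0 hα1 hCpos'
    -- probability measure
    have i0 : Fin n := ⟨0, hn1⟩
    have hprob : IsProbabilityMeasure μn := by
      rw [hμn, ← hlaw n i0]
      exact Measure.isProbabilityMeasure_map (hmeas n i0).aemeasurable
    -- second moment facts
    have hsqInt : Integrable (fun w : ℝ => w ^ 2) μn := bfry_sq_int hα0 hα1 hCpos'
    have hM2le : ∫ w, w ^ 2 ∂μn ≤ ZC⁻¹ * (C n ^ (2 - α) / (2 - α)) :=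
      bfry_sq_moment_le hα0 hα1 hCpos'
    -- Memℒp of W n i
    have hWmem : ∀ i : Fin n, MemLp (W n i) 2 (volume : Measure Ω) := by
      intro i
      have hid : MemLp (id : ℝ → ℝ) 2 (Measure.map (W n i) volume) := by
        rw [hlaw n i]
        refine (memLp_two_iff_integrable_sq aestronglyMeasurable_id).2 ?_
        exact hsqInt.congr (ae_of_all _ fun w => by simp [sq])
      have := (memLp_map_measure_iff aestronglyMeasurable_id (hmeas n i).aemeasurable).1 hid
      simpa using this
    -- the scaled variables
    set Y : Fin n → Ω → ℝ := fun i ω => W n i ω / K with hYdef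
    have hYmem : ∀ i : Fin n, MemLp (Y i) 2 (volume : Measure Ω) := by
      intro i
      have heq : Y i = fun ω => K⁻¹ * W n i ω := by
        funext ω; simp [hYdef, div_eq_inv_mul]
      rw [heq]
      exact (hWmem i).const_mul K⁻¹
    set E2 : ℝ := ∫ w, (w / K) ^ 2 ∂μn with hE2def
    have hEYsq : ∀ i : Fin n, ∫ ω, (Y i ω) ^ 2 = E2 := by
      intro i
      rw [hE2def, hμn, ← hlaw n i,
        integral_map (hmeas n i).aemeasurable
          (Measurable.aestronglyMeasurable (by fun_prop))]
    have hE2eq : E2 = (∫ w, w ^ 2 ∂μn) / K ^ 2 := by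
      rw [hE2def, ← integral_div]
      exact integral_congr_ae (ae_of_all _ fun w => by simp [div_pow])
    -- exponent bound
    have hpow : C n ^ (2 - α) / K ^ 2 ≤ C n ^ α := by
      have hK2 : K ^ 2 = C n ^ ((s - α) * 2) := by
        rw [hKdef, ← Real.rpow_natCast (C n ^ (s - α)) 2, ← Real.rpow_mul hCpos'.le]
        norm_num
      rw [hK2, ← Real.rpow_sub hCpos']
      exact Real.rpow_le_rpow_of_exponent_le hCn1 (by linarith)
    have hE2le : E2 ≤ Z1⁻¹ * C n ^ α / (2 - α) := by
      have hZC1 : Z1 ≤ ZC := bfry_Z_mono hα0 hα1 one_pos hCn1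
      have hZCinvle : ZC⁻¹ ≤ Z1⁻¹ := by
        apply inv_anti₀ hZ1pos hZC1
      have hcd : (0:ℝ) ≤ C n ^ (2 - α) / (2 - α) := by positivity
      have hM2' : ∫ w, w ^ 2 ∂μn ≤ Z1⁻¹ * (C n ^ (2 - α) / (2 - α)) :=
        hM2le.trans (mul_le_mul_of_nonneg_right hZCinvle hcd)
      rw [hE2eq]
      calc (∫ w, w ^ 2 ∂μn) / K ^ 2
          ≤ (Z1⁻¹ * (C n ^ (2 - α) / (2 - α))) / K ^ 2 :=
            (div_le_div_iff_of_pos_right (by positivity)).2 hM2'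
        _ = (Z1⁻¹ / (2 - α)) * (C n ^ (2 - α) / K ^ 2) := by ring
        _ ≤ (Z1⁻¹ / (2 - α)) * C n ^ α :=
            mul_le_mul_of_nonneg_left hpow
              (div_nonneg (inv_nonneg.2 hZ1pos.le) h2α.le)
        _ = Z1⁻¹ * C n ^ α / (2 - α) := by ring
    -- sum and its variance
    set T : Ω → ℝ := ∑ i : Fin n, Y i with hTdef
    have hTmem : MemLp T 2 (volume : Measure Ω) :=
      memLp_finset_sum' _ (fun i _ => hYmem i)
    have hpair : Set.Pairwise ↑(Finset.univ : Finset (Fin n))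
        (fun i j => IndepFun (Y i) (Y j) (volume : Measure Ω)) := by
      intro i _ j _ hij
      exact ((hindep n).indepFun hij).comp
        (measurable_id.div_const K) (measurable_id.div_const K)
    have hvarsum : variance T volume = ∑ i : Fin n, variance (Y i) volume :=
      IndepFun.variance_sum (fun i _ => hYmem i) hpair
    have hvarle : variance T volume ≤ n * E2 := by
      rw [hvarsum]
      calc ∑ i : Fin n, variance (Y i) volume ≤ ∑ _i : Fin n, E2 := by
            apply Finset.sum_le_sum
            intro i _
            calc variance (Y i) volume ≤ ∫ ω, ((Y i) ^ 2) ω :=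
                  variance_le_expectation_sq (hYmem i).1
              _ = E2 := by
                  rw [← hEYsq i]
                  exact integral_congr_ae (ae_of_all _ fun ω => by simp)
        _ = n * E2 := by
            simp [Finset.sum_const, Finset.card_univ, nsmul_eq_mul]
    -- expectation of T
    have hEY : ∀ i : Fin n, ∫ ω, Y i ω = ∫ w, w / K ∂μn := by
      intro i
      rw [hμn, ← hlaw n i, integral_map (hmeas n i).aemeasurable (by fun_prop)]
    have hET : ∫ ω, T ω = n * ∫ w, w / K ∂μn := by
      have : ∫ ω, T ω = ∑ i : Fin n, ∫ ω, Y i ω := by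
        rw [hTdef]
        have h := integral_finset_sum (μ := (volume : Measure Ω)) Finset.univ
          (fun i _ => (hYmem i).integrable one_le_two)
        simpa using h
      rw [this]
      simp [hEY, Finset.sum_const, Finset.card_univ, nsmul_eq_mul]
    -- Chebyshev
    have hcheb := meas_ge_le_variance_div_sq (μ := (volume : Measure Ω)) hTmem
      (mul_pos hnpos hε)
    -- event identification
    have hsetEq : {ω : Ω | ε ≤ |(1 / (n : ℝ)) * ∑ i : Fin n, W n i ω / K
          - ∫ w, (w / K) ∂μn|}
        = {ω : Ω | (n : ℝ) * ε ≤ |T ω - (volume : Measure Ω)[T]|} := by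
      ext ω
      simp only [mem_setOf_eq]
      have hTω : T ω = ∑ i : Fin n, W n i ω / K := by
        simp [hTdef, hYdef]
      rw [show (volume : Measure Ω)[T] = ∫ ω, T ω from rfl, hET, hTω]
      set m : ℝ := ∫ w, w / K ∂μn with hm
      have key : |(∑ i : Fin n, W n i ω / K) - (n : ℝ) * m|
          = (n : ℝ) * |(1 / (n : ℝ)) * (∑ i : Fin n, W n i ω / K) - m| := by
        rw [← abs_of_pos hnpos, ← abs_mul]
        congr 1
        field_simp
        rw [abs_of_pos hnpos]; ring
      rw [key]
      exact (mul_le_mul_iff_of_pos_left hnpos).symm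
    -- numeric bound
    have hnum : variance T volume / ((n : ℝ) * ε) ^ 2 ≤ D * (C n ^ α / n) := by
      have h1 : variance T volume ≤ n * (Z1⁻¹ * C n ^ α / (2 - α)) :=
        hvarle.trans (mul_le_mul_of_nonneg_left hE2le hnpos.le)
      calc variance T volume / ((n : ℝ) * ε) ^ 2
          ≤ ((n : ℝ) * (Z1⁻¹ * C n ^ α / (2 - α))) / ((n : ℝ) * ε) ^ 2 :=
            (div_le_div_iff_of_pos_right (by positivity)).2 h1
        _ = D * (C n ^ α / n) := by
            rw [hDdef]; field_simp
    calc ((volume : Measure Ω)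
          {ω | ε ≤ |(1 / (n : ℝ)) * ∑ i : Fin n, W n i ω / K - ∫ w, (w / K) ∂μn|})
        = (volume : Measure Ω) {ω | (n : ℝ) * ε ≤ |T ω - (volume : Measure Ω)[T]|} := by
          rw [hsetEq]
      _ ≤ ENNReal.ofReal (variance T volume / ((n : ℝ) * ε) ^ 2) := hcheb
      _ ≤ ENNReal.ofReal (D * (C n ^ α / n)) := ENNReal.ofReal_le_ofReal hnum
  have hb : Tendsto (fun n : ℕ => ENNReal.ofReal (D * (C n ^ α / n))) atTop (nhds 0) := by
    have h1 : Tendsto (fun n : ℕ => D * (C n ^ α / n)) atTop (nhds (D * 0)) :=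
      hCn.const_mul D
    rw [mul_zero] at h1
    have := ENNReal.tendsto_ofReal h1
    simpa using this
  exact tendsto_of_tendsto_of_tendsto_of_le_of_le' tendsto_const_nhds hb
    (Eventually.of_forall fun n => zero_le) hev
end
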